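/- Let S = (B_1,...,B_ℓ) be an ordered set partition of [n] with n ∈ B_ℓ. Define N_S ⊂ R^{n-1} as the simplex with vertices 0, e_{B_1}, e_{B_1∪B_2}, ..., e_{B_1∪...∪B_{ℓ-1}}, where e_A = Σ_{i∈A} e_i. Then N_S equals the intersection of π^{-1}(Δ_S) with the hyperplane {x_n = 0} (with the last coordinate dropped), where π : R^n → H_n is the orthogonal projection and Δ_S is the alcoved simplex of S. -/

import Mathlib

lemma tel8 (D : ℕ → ℝ) : ∀ a b, a ≤ b → ∑ k ∈ Finset.Ico a b, (D k - D (k+1)) = D a - D b := by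
  intro a b hab
  induction b, hab using Nat.le_induction with
  | base => simp
  | succ b hb ih => rw [Finset.sum_Ico_succ_top hb, ih]; ring


open Classical in
/-- For an ordered set partition `S = (B 0, ..., B ℓ)` of `[m+1]` whose last block
contains the last element, the simplex `N_S` with vertices
`0, e_{B 0}, e_{B 0 ∪ B 1}, ...` equals the set obtained from
`π⁻¹(Δ_S) ∩ {x_n = 0}` by dropping the last coordinate, where `π` is the
orthogonal projection onto `H_n` (subtracting the mean). -/
theorem stmt8 {m ℓ : ℕ}
    (B : Fin (ℓ + 1) → Finset (Fin (m + 1)))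
    (hdisj : ∀ k k' : Fin (ℓ + 1), k ≠ k' → Disjoint (B k) (B k'))
    (hne : ∀ k, (B k).Nonempty)
    (hcover : ∀ i : Fin (m + 1), ∃ k, i ∈ B k)
    (hlast : Fin.last m ∈ B (Fin.last ℓ))
    (V : Fin (ℓ + 1) → (Fin m → ℝ))
    (hV : ∀ (t : Fin (ℓ + 1)) (i : Fin m),
      V t i = if ∃ s : Fin (ℓ + 1), s < t ∧ i.castSucc ∈ B s then (1 : ℝ) else 0)
    (Δ : Set (Fin (m + 1) → ℝ))
    (hΔ : Δ = {x : Fin (m + 1) → ℝ | (∑ i, x i) = 0 ∧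
        (∀ k : Fin (ℓ + 1), ∀ i ∈ B k, ∀ j ∈ B k, x i = x j) ∧
        (∀ k : Fin ℓ, ∀ i ∈ B k.castSucc, ∀ j ∈ B k.succ, x j ≤ x i) ∧
        (∀ i ∈ B (Fin.last ℓ), ∀ j ∈ B 0, x j - 1 ≤ x i)}) :
    convexHull ℝ (Set.range V) =
      {y : Fin m → ℝ | ∃ x : Fin (m + 1) → ℝ,
        (fun i => x i - (∑ r, x r) / ((m : ℝ) + 1)) ∈ Δ ∧
        x (Fin.last m) = 0 ∧ y = fun i : Fin m => x i.castSucc} := by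
  classical
  have huniq : ∀ (i : Fin (m+1)) (k k' : Fin (ℓ+1)), i ∈ B k → i ∈ B k' → k = k' := by
    intro i k k' hk hk'
    by_contra h
    exact (Finset.disjoint_left.mp (hdisj k k' h)) hk hk'
  have hπ : ∀ x : Fin (m+1) → ℝ,
      ((fun i => x i - (∑ r, x r) / ((m : ℝ) + 1)) ∈ Δ) ↔
      ((∀ k : Fin (ℓ + 1), ∀ i ∈ B k, ∀ j ∈ B k, x i = x j) ∧
        (∀ k : Fin ℓ, ∀ i ∈ B k.castSucc, ∀ j ∈ B k.succ, x j ≤ x i) ∧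
        (∀ i ∈ B (Fin.last ℓ), ∀ j ∈ B 0, x j - 1 ≤ x i)) := by
    intro x
    rw [hΔ]
    simp only [Set.mem_setOf_eq]
    have hm1 : ((m : ℝ) + 1) ≠ 0 := by positivity
    have hsum : ∑ i, (x i - (∑ r, x r) / ((m : ℝ) + 1)) = 0 := by
      rw [Finset.sum_sub_distrib, Finset.sum_const, Finset.card_univ, Fintype.card_fin,
        nsmul_eq_mul]
      push_cast
      field_simp
      ring
    constructor
    · rintro ⟨-, h1, h2, h3⟩
      refine ⟨?_, ?_, ?_⟩
      · intro k i hi j hj; have := h1 k i hi j hj; linarith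
      · intro k i hi j hj; have := h2 k i hi j hj; linarith
      · intro i hi j hj; have := h3 i hi j hj; linarith
    · rintro ⟨h1, h2, h3⟩
      refine ⟨hsum, ?_, ?_, ?_⟩
      · intro k i hi j hj; have := h1 k i hi j hj; linarith
      · intro k i hi j hj; have := h2 k i hi j hj; linarith
      · intro i hi j hj; have := h3 i hi j hj; linarith
  apply Set.Subset.antisymm
  · apply convexHull_min
    · rintro _ ⟨t, rfl⟩
      refine ⟨fun i => if ∃ s, s < t ∧ i ∈ B s then 1 else 0, ?_, ?_, ?_⟩
      · rw [hπ]
        have key : ∀ (i : Fin (m+1)) (k : Fin (ℓ+1)), i ∈ B k →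
            ((∃ s, s < t ∧ i ∈ B s) ↔ k < t) := by
          intro i k hk
          constructor
          · rintro ⟨s, hst, hs⟩; rwa [huniq i s k hs hk] at hst
          · intro h; exact ⟨k, h, hk⟩
        refine ⟨?_, ?_, ?_⟩
        · intro k i hi j hj
          simp only [if_congr (key i k hi) rfl rfl, if_congr (key j k hj) rfl rfl]
        · intro k i hi j hj
          simp only [if_congr (key i k.castSucc hi) rfl rfl, if_congr (key j k.succ hj) rfl rfl]
          split_ifs with h1 h2 <;> try norm_num
          exact absurd (((Fin.castSucc_lt_succ : k.castSucc < k.succ)).trans h1) h2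
        · intro i hi j hj
          split_ifs <;> norm_num
      · show (if ∃ s, s < t ∧ Fin.last m ∈ B s then (1:ℝ) else 0) = 0
        rw [if_neg]
        rintro ⟨s, hst, hs⟩
        rw [huniq _ s (Fin.last ℓ) hs hlast] at hst
        exact absurd hst (not_lt.mpr (Fin.le_last t))
      · funext i
        exact hV t i
    · rintro y1 ⟨x1, hx1, h01, rfl⟩ y2 ⟨x2, hx2, h02, rfl⟩ a b ha hb hab
      rw [hπ] at hx1 hx2
      obtain ⟨p1, p2, p3⟩ := hx1
      obtain ⟨q1, q2, q3⟩ := hx2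
      refine ⟨fun i => a * x1 i + b * x2 i, ?_, ?_, ?_⟩
      · rw [hπ]
        refine ⟨?_, ?_, ?_⟩
        · intro k i hi j hj; rw [p1 k i hi j hj, q1 k i hi j hj]
        · intro k i hi j hj
          have e1 := p2 k i hi j hj
          have e2 := q2 k i hi j hj
          nlinarith [mul_le_mul_of_nonneg_left e1 ha, mul_le_mul_of_nonneg_left e2 hb]
        · intro i hi j hj
          have e1 := p3 i hi j hj
          have e2 := q3 i hi j hj
          nlinarith [mul_le_mul_of_nonneg_left e1 ha, mul_le_mul_of_nonneg_left e2 hb]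
      · simp [h01, h02]
      · funext i
        simp [smul_eq_mul]
  · rintro y ⟨x, hx, hx0, rfl⟩
    rw [hπ] at hx
    obtain ⟨h1, h2, h3⟩ := hx
    have hblk : ∀ i : Fin (m+1), i ∈ B (hcover i).choose := fun i => (hcover i).choose_spec
    set c : Fin (ℓ+1) → ℝ := fun k => x (hne k).choose with hcdef
    have hcmem : ∀ k, (hne k).choose ∈ B k := fun k => (hne k).choose_spec
    have hc : ∀ k, ∀ i ∈ B k, x i = c k := fun k i hi => h1 k i hi _ (hcmem k)
    have hclast : c (Fin.last ℓ) = 0 := by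
      rw [← hc _ _ hlast, hx0]
    have hstep : ∀ k : Fin ℓ, c k.succ ≤ c k.castSucc :=
      fun k => h2 k _ (hcmem k.castSucc) _ (hcmem k.succ)
    have hc0 : c 0 ≤ 1 := by
      have := h3 _ (hcmem (Fin.last ℓ)) _ (hcmem 0)
      have h0 : x ((hne 0).choose) = c 0 := rfl
      have hl : x ((hne (Fin.last ℓ)).choose) = c (Fin.last ℓ) := rfl
      rw [h0, hl, hclast] at this
      linarith
    set D : ℕ → ℝ := fun k => if k = 0 then 1 else if h : k - 1 < ℓ + 1 then c ⟨k-1, h⟩ else 0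
      with hDdef
    have hD0 : D 0 = 1 := by simp [hDdef]
    have hDsucc : ∀ k (h : k < ℓ+1), D (k+1) = c ⟨k, h⟩ := by
      intro k h; simp [hDdef, h, Nat.lt_succ_iff.mp h]
    have hDtop : D (ℓ+1) = 0 := by
      rw [hDsucc ℓ (Nat.lt_succ_self ℓ)]
      exact hclast
    have hmono : ∀ k, k < ℓ + 1 → D (k+1) ≤ D k := by
      intro k hk
      match k with
      | 0 => rw [hDsucc 0 hk, hD0]; exact hc0
      | (j+1) =>
        have hj : j < ℓ := by omega
        rw [hDsucc (j+1) hk, hDsucc j (by omega)]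
        exact hstep ⟨j, hj⟩
    set w : Fin (ℓ+1) → ℝ := fun t => D t.val - D (t.val+1) with hwdef
    have hw0 : ∀ t, 0 ≤ w t := by
      intro t
      have := hmono t.val t.isLt
      simp only [hwdef]
      linarith
    have hwsum : ∑ t, w t = 1 := by
      rw [hwdef, Fin.sum_univ_eq_sum_range (fun k => D k - D (k+1)), Finset.range_eq_Ico,
        tel8 D 0 (ℓ+1) (Nat.zero_le _), hD0, hDtop]
      ring
    have hmem := Finset.centerMass_mem_convexHull (Finset.univ) (fun t _ => hw0 t)
      (by rw [hwsum]; norm_num) (fun t (_ : t ∈ Finset.univ) => Set.mem_range_self (f := V) t)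
    have hcm : Finset.univ.centerMass w V = fun i => x i.castSucc := by
      rw [Finset.centerMass, hwsum]
      funext i
      simp only [inv_one, one_smul, Finset.sum_apply, Pi.smul_apply, smul_eq_mul]
      set s0 : Fin (ℓ+1) := (hcover i.castSucc).choose with hs0
      have hkey : ∀ t : Fin (ℓ+1), w t * V t i =
          (fun k => if s0.val < k then D k - D (k+1) else 0) t.val := by
        intro t
        rw [hV t i]
        have hcond : (∃ s, s < t ∧ i.castSucc ∈ B s) ↔ s0 < t := by
          constructor
          · rintro ⟨s, hst, hs⟩; rwa [huniq _ s s0 hs (hblk i.castSucc)] at hst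
          · intro h; exact ⟨s0, h, hblk i.castSucc⟩
        rw [if_congr hcond rfl rfl]
        simp only [Fin.lt_def]
        split_ifs <;> simp [hwdef]
      rw [Finset.sum_congr rfl (fun t _ => hkey t),
        Fin.sum_univ_eq_sum_range (fun k => if s0.val < k then D k - D (k+1) else 0),
        ← Finset.sum_filter]
      have hfil : (Finset.range (ℓ+1)).filter (fun k => s0.val < k) =
          Finset.Ico (s0.val + 1) (ℓ+1) := by
        ext k; simp [Finset.mem_filter, Finset.mem_Ico]; omega
      rw [hfil, tel8 D (s0.val+1) (ℓ+1) (by omega), hDtop, hDsucc s0.val s0.isLt]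
      rw [hc s0 _ (hblk i.castSucc)]
      simp
    rw [hcm] at hmem
    exact hmem
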